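/- Let n be even. Define a partial coloring of the n×n grid with colors {1,…,2n-1} by: for i ≠ n and i > j, entry (i,j) gets color (i+j) mod (n-1) (taken in {1,…,n-1}); entry (n,i) for 1 ≤ i ≤ n-1 gets color 2i mod (n-1); and whenever (i,j) is colored with color c (for i > j or i = n), entry (j,i) is colored with color c + n. Then for each i, the 2n-2 colored entries in the union of row i and column i use exactly the colors {1,…,2n-1} \ {n}, and the unique extension to L(n, 2n-1) colors every diagonal entry (i,i) with color n. -/
import Mathlib


/-- The color (in `{1,…,n-1}`) of the below-diagonal entry `(i,j)` (with `j < i`):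
`(i+j) mod (n-1)` for `i ≠ n`, and `2j mod (n-1)` for `i = n`,
residues taken in `{1,…,n-1}`. -/
def lowColor (n i j : ℕ) : ℕ :=
  if i = n then (2*j - 1) % (n - 1) + 1 else (i + j - 1) % (n - 1) + 1

/-- The partial coloring of Section 2: below the diagonal use `lowColor`;
above the diagonal, entry `(i,j)` gets the color of `(j,i)` shifted by `n`;
the diagonal is uncolored. -/
def constructionPC (n i j : ℕ) : Option ℕ :=
  if j < i then some (lowColor n i j)
  else if i < j then some (lowColor n j i + n)
  else none

/-- A Latin square on the grid `{1,…,n} × {1,…,n}` with colors `{1,…,k}`. -/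
def IsLatinOn (n k : ℕ) (L : ℕ → ℕ → ℕ) : Prop :=
  (∀ i ∈ Finset.Icc 1 n, ∀ j ∈ Finset.Icc 1 n, L i j ∈ Finset.Icc 1 k) ∧
  (∀ i ∈ Finset.Icc 1 n, ∀ j₁ ∈ Finset.Icc 1 n, ∀ j₂ ∈ Finset.Icc 1 n,
    L i j₁ = L i j₂ → j₁ = j₂) ∧
  (∀ j ∈ Finset.Icc 1 n, ∀ i₁ ∈ Finset.Icc 1 n, ∀ i₂ ∈ Finset.Icc 1 n,
    L i₁ j = L i₂ j → i₁ = i₂)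

lemma shift_mod (m a c : ℕ) (hm : 0 < m) (ha : 1 ≤ a) (hc1 : 1 ≤ c) (hcm : c ≤ m)
    (h : a % m = c % m) : (a - 1) % m + 1 = c := by
  have h1 : (a - 1 + 1) % m = (c - 1 + 1) % m := by
    rw [Nat.sub_add_cancel ha, Nat.sub_add_cancel hc1]; exact h
  have h2 : (a - 1) % m = (c - 1) % m :=
    Nat.ModEq.add_right_cancel (Nat.ModEq.refl 1) h1
  have h3 : (c - 1) % m = c - 1 := Nat.mod_eq_of_lt (by omega)
  omega

lemma solve_add (m a c : ℕ) (hm : 0 < m) :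
    ∃ x, 1 ≤ x ∧ x ≤ m ∧ (a + x) % m = c % m := by
  have ham : a % m < m := Nat.mod_lt a hm
  set t := (c + m - a % m) % m with ht
  have htm : t < m := Nat.mod_lt _ hm
  refine ⟨if t = 0 then m else t, by split_ifs <;> omega, by split_ifs <;> omega, ?_⟩
  have hx : (if t = 0 then m else t) % m = t := by
    split_ifs with h
    · simp [h]
    · exact Nat.mod_eq_of_lt htm
  rw [Nat.add_mod a _ m, hx, ht, Nat.add_mod_mod,
    show a % m + (c + m - a % m) = c + m by omega, Nat.add_mod_right]

lemma solve_double (m c h : ℕ) (hm : 0 < m) (hh : (2*h) % m = 1 % m) :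
    ∃ x, 1 ≤ x ∧ x ≤ m ∧ (2*x) % m = c % m := by
  obtain ⟨x, hx1, hx2, hx3⟩ := solve_add m 0 (c*h) hm
  rw [Nat.zero_add] at hx3
  refine ⟨x, hx1, hx2, ?_⟩
  calc (2*x) % m = (2 % m * (x % m)) % m := by rw [← Nat.mul_mod]
    _ = (2 % m * ((c*h) % m)) % m := by rw [hx3]
    _ = (2 * (c*h)) % m := by rw [← Nat.mul_mod]
    _ = ((2*h) % m * (c % m)) % m := by rw [← Nat.mul_mod, show 2*(c*h) = 2*h*c by ring]
    _ = (1 % m * (c % m)) % m := by rw [hh]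
    _ = c % m := by rw [← Nat.mul_mod, one_mul]

lemma lowColor_bounds (n i j : ℕ) (h : 2 ≤ n) :
    1 ≤ lowColor n i j ∧ lowColor n i j ≤ n - 1 := by
  unfold lowColor
  split_ifs
  · have := Nat.mod_lt (2*j-1) (show 0 < n-1 by omega); omega
  · have := Nat.mod_lt (i+j-1) (show 0 < n-1 by omega); omega

lemma core (n i : ℕ) (hn : Even n) (h2 : 2 ≤ n) (hi1 : 1 ≤ i) (hi2 : i ≤ n) :
    ((Finset.Icc 1 n).erase i).image
      (fun x => if x < i then lowColor n i x else lowColor n x i)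
      = Finset.Icc 1 (n - 1) := by
  have hm : 0 < n - 1 := by omega
  ext c
  simp only [Finset.mem_image, Finset.mem_erase, Finset.mem_Icc]
  constructor
  · rintro ⟨x, ⟨hxi, hx1, hx2⟩, hv⟩
    have b1 := lowColor_bounds n i x h2
    have b2 := lowColor_bounds n x i h2
    split_ifs at hv <;> omega
  · rintro ⟨hc1, hc2⟩
    by_cases hin : i = n
    · subst hin
      obtain ⟨r, hr⟩ := hn
      obtain ⟨x, hx1, hx2, hx3⟩ := solve_double (i-1) c r hm
        (by rw [show 2*r = 1 + (i-1) by omega]; exact Nat.add_mod_right 1 (i-1))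
      refine ⟨x, ⟨by omega, by omega, by omega⟩, ?_⟩
      rw [if_pos (by omega : x < i)]
      unfold lowColor
      rw [if_pos rfl]
      exact shift_mod (i-1) (2*x) c hm (by omega) hc1 hc2 hx3
    · by_cases hdc : (2*i - 1) % (n-1) + 1 = c
      · refine ⟨n, ⟨Ne.symm hin, by omega, le_refl n⟩, ?_⟩
        rw [if_neg (by omega)]
        unfold lowColor
        rw [if_pos rfl]
        exact hdc
      · obtain ⟨x, hx1, hx2, hx3⟩ := solve_add (n-1) i c hm
        have hxi : x ≠ i := by
          intro h; subst h
          exact hdc (shift_mod (n-1) (2*x) c hm (by omega) hc1 hc2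
            (by rw [show 2*x = x+x by ring]; exact hx3))
        refine ⟨x, ⟨hxi, by omega, by omega⟩, ?_⟩
        by_cases hlt : x < i
        · rw [if_pos hlt]; unfold lowColor; rw [if_neg hin]
          exact shift_mod (n-1) (i+x) c hm (by omega) hc1 hc2 hx3
        · rw [if_neg hlt]; unfold lowColor
          rw [if_neg (show x ≠ n by omega)]
          exact shift_mod (n-1) (x+i) c hm (by omega) hc1 hc2
            (by rw [Nat.add_comm]; exact hx3)

lemma pc_row (n i x : ℕ) (hxi : x ≠ i) :
    (constructionPC n i x).getD 0
      = if x < i then lowColor n i x else lowColor n x i + n := by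
  unfold constructionPC
  rcases lt_or_gt_of_ne hxi with h | h
  · rw [if_pos h, if_pos h]; rfl
  · rw [if_neg (by omega), if_pos h, if_neg (by omega)]; rfl

lemma pc_col (n i x : ℕ) (hxi : x ≠ i) :
    (constructionPC n x i).getD 0
      = if x < i then lowColor n i x + n else lowColor n x i := by
  unfold constructionPC
  rcases lt_or_gt_of_ne hxi with h | h
  · rw [if_neg (by omega), if_pos h, if_pos h]; rfl
  · rw [if_pos h, if_neg (by omega)]; rfl

lemma pc_some (n i j : ℕ) (h : i ≠ j) :
    constructionPC n i j = some ((constructionPC n i j).getD 0) := by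
  unfold constructionPC
  rcases lt_or_gt_of_ne h with hlt | hlt
  · rw [if_neg (by omega), if_pos hlt]; rfl
  · rw [if_pos hlt]; rfl

lemma union_eq (n i : ℕ) :
    (((Finset.Icc 1 n).erase i).image (fun w => (constructionPC n i w).getD 0)) ∪
    (((Finset.Icc 1 n).erase i).image (fun h => (constructionPC n h i).getD 0)) =
    (((Finset.Icc 1 n).erase i).image
      (fun x => if x < i then lowColor n i x else lowColor n x i)) ∪
    (((Finset.Icc 1 n).erase i).image
      (fun x => (if x < i then lowColor n i x else lowColor n x i) + n)) := by
  ext c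
  simp only [Finset.mem_union, Finset.mem_image, Finset.mem_erase]
  constructor
  · rintro (⟨x, hx, hv⟩ | ⟨x, hx, hv⟩)
    · rw [pc_row n i x hx.1] at hv
      by_cases h : x < i
      · exact Or.inl ⟨x, hx, by rw [if_pos h] at hv ⊢; exact hv⟩
      · exact Or.inr ⟨x, hx, by rw [if_neg h] at hv ⊢; exact hv⟩
    · rw [pc_col n i x hx.1] at hv
      by_cases h : x < i
      · exact Or.inr ⟨x, hx, by rw [if_pos h] at hv ⊢; exact hv⟩
      · exact Or.inl ⟨x, hx, by rw [if_neg h] at hv ⊢; exact hv⟩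
  · rintro (⟨x, hx, hv⟩ | ⟨x, hx, hv⟩)
    · by_cases h : x < i
      · exact Or.inl ⟨x, hx, by rw [pc_row n i x hx.1, if_pos h]; rw [if_pos h] at hv; exact hv⟩
      · exact Or.inr ⟨x, hx, by rw [pc_col n i x hx.1, if_neg h]; rw [if_neg h] at hv; exact hv⟩
    · by_cases h : x < i
      · exact Or.inr ⟨x, hx, by rw [pc_col n i x hx.1, if_pos h]; rw [if_pos h] at hv; exact hv⟩
      · exact Or.inl ⟨x, hx, by rw [pc_row n i x hx.1, if_neg h]; rw [if_neg h] at hv; exact hv⟩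

lemma part1 (n : ℕ) (hn : Even n) (i : ℕ) (hi : i ∈ Finset.Icc 1 n) :
    (((Finset.Icc 1 n).erase i).image (fun w => (constructionPC n i w).getD 0)) ∪
    (((Finset.Icc 1 n).erase i).image (fun h => (constructionPC n h i).getD 0)) =
      (Finset.Icc 1 (2*n - 1)).erase n := by
  simp only [Finset.mem_Icc] at hi
  have h2 : 2 ≤ n := by obtain ⟨r, hr⟩ := hn; omega
  have hcore := core n i hn h2 hi.1 hi.2
  have hshift : ((Finset.Icc 1 n).erase i).image
      (fun x => (if x < i then lowColor n i x else lowColor n x i) + n)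
      = (Finset.Icc 1 (n-1)).image (fun c => c + n) := by
    rw [← hcore, Finset.image_image]
    rfl
  rw [union_eq, hcore, hshift]
  ext c
  simp only [Finset.mem_union, Finset.mem_image, Finset.mem_Icc, Finset.mem_erase]
  constructor
  · rintro (⟨h1, h2'⟩ | ⟨a, ⟨ha1, ha2⟩, rfl⟩) <;> omega
  · rintro ⟨hne, hc1, hc2⟩
    by_cases h : c ≤ n - 1
    · exact Or.inl ⟨hc1, h⟩
    · exact Or.inr ⟨c - n, ⟨by omega, by omega⟩, by omega⟩

theorem construction_covers_all_but_n (n : ℕ) (hn : Even n) :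
    (∀ i ∈ Finset.Icc 1 n,
      (((Finset.Icc 1 n).erase i).image (fun w => (constructionPC n i w).getD 0)) ∪
      (((Finset.Icc 1 n).erase i).image (fun h => (constructionPC n h i).getD 0)) =
        (Finset.Icc 1 (2*n - 1)).erase n) ∧
    (∀ L : ℕ → ℕ → ℕ, IsLatinOn n (2*n - 1) L →
      (∀ i j c, constructionPC n i j = some c → L i j = c) →
      ∀ i ∈ Finset.Icc 1 n, L i i = n) := by
  refine ⟨fun i hi => part1 n hn i hi, ?_⟩
  intro L hL hag i hi
  obtain ⟨hmem, hrinj, hcinj⟩ := hL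
  have hii := hmem i hi i hi
  simp only [Finset.mem_Icc] at hii
  have hnot : L i i ∉ (Finset.Icc 1 (2*n - 1)).erase n := by
    rw [← part1 n hn i hi]
    intro hc
    rcases Finset.mem_union.mp hc with h | h
    · obtain ⟨w, hw, hv⟩ := Finset.mem_image.mp h
      obtain ⟨hwi, hwIcc⟩ := Finset.mem_erase.mp hw
      have hLiw : L i w = (constructionPC n i w).getD 0 :=
        hag i w _ (pc_some n i w (Ne.symm hwi))
      exact hwi (hrinj i hi w hwIcc i hi (by rw [hLiw, hv]))
    · obtain ⟨w, hw, hv⟩ := Finset.mem_image.mp h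
      obtain ⟨hwi, hwIcc⟩ := Finset.mem_erase.mp hw
      have hLwi : L w i = (constructionPC n w i).getD 0 :=
        hag w i _ (pc_some n w i hwi)
      exact hwi (hcinj i hi w hwIcc i hi (by rw [hLwi, hv]))
  simp only [Finset.mem_erase, Finset.mem_Icc] at hnot
  omega
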